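/- Let S and W be symmetric positive definite m×m real matrices with d·W ≤ S ≤ D·W in the Loewner order, for constants 0 < d ≤ D. Then for all γ ≥ 0, the matrices S_γ := (S⁻¹ + γW⁻¹)⁻¹ and W_γ := ((1+γ)W⁻¹)⁻¹ satisfy ((1+γ)d/(1+γd))·W_γ ≤ S_γ ≤ ((1+γ)D/(1+γD))·W_γ. -/

import Mathlib

open Matrix

private lemma dot_symm {m : ℕ} {A : Matrix (Fin m) (Fin m) ℝ} (hA : A.IsHermitian)
    (u v : Fin m → ℝ) : u ⬝ᵥ A *ᵥ v = v ⬝ᵥ A *ᵥ u := by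
  have ht : Aᵀ = A := by
    have := hA.eq
    simpa [Matrix.conjTranspose_eq_transpose_of_trivial] using this
  rw [dotProduct_mulVec, dotProduct_comm]
  congr 1
  rw [← mulVec_transpose, ht]

private lemma key_ineq {m : ℕ} {A : Matrix (Fin m) (Fin m) ℝ} (hA : A.PosDef)
    (x y : Fin m → ℝ) : 2 * (x ⬝ᵥ y) - y ⬝ᵥ A *ᵥ y ≤ x ⬝ᵥ A⁻¹ *ᵥ x := by
  have hdet : IsUnit A.det := hA.det_pos.ne'.isUnit
  have hAinv : A * A⁻¹ = 1 := Matrix.mul_nonsing_inv A hdet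
  set u : Fin m → ℝ := A⁻¹ *ᵥ x with hu
  have hx : A *ᵥ u = x := by
    rw [hu, mulVec_mulVec, hAinv, one_mulVec]
  have h0 : 0 ≤ (u - y) ⬝ᵥ A *ᵥ (u - y) := by
    have := hA.posSemidef.dotProduct_mulVec_nonneg (u - y)
    simpa using this
  have hexp : (u - y) ⬝ᵥ A *ᵥ (u - y)
      = u ⬝ᵥ A *ᵥ u - 2 * (u ⬝ᵥ A *ᵥ y) + y ⬝ᵥ A *ᵥ y := by
    have hsymm := dot_symm hA.isHermitian u y
    simp [Matrix.mulVec_sub, dotProduct_sub, sub_dotProduct, hsymm]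
    ring
  have hxy : x ⬝ᵥ y = u ⬝ᵥ A *ᵥ y := by
    rw [← hx, dotProduct_comm]
    exact dot_symm hA.isHermitian y u
  have hxx : x ⬝ᵥ A⁻¹ *ᵥ x = u ⬝ᵥ A *ᵥ u := by
    rw [← hu, ← hx, dotProduct_comm]
  rw [hxy, hxx]
  nlinarith [h0, hexp]

private lemma myInvLe {m : ℕ} {A B : Matrix (Fin m) (Fin m) ℝ}
    (hA : A.PosDef) (hB : B.PosDef)
    (h : ∀ x : Fin m → ℝ, x ⬝ᵥ A *ᵥ x ≤ x ⬝ᵥ B *ᵥ x) (x : Fin m → ℝ) :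
    x ⬝ᵥ B⁻¹ *ᵥ x ≤ x ⬝ᵥ A⁻¹ *ᵥ x := by
  have hdet : IsUnit B.det := hB.det_pos.ne'.isUnit
  have hBinv : B * B⁻¹ = 1 := Matrix.mul_nonsing_inv B hdet
  set y : Fin m → ℝ := B⁻¹ *ᵥ x with hy
  have hBy : B *ᵥ y = x := by rw [hy, mulVec_mulVec, hBinv, one_mulVec]
  have h1 : y ⬝ᵥ B *ᵥ y = x ⬝ᵥ B⁻¹ *ᵥ x := by
    rw [hBy, ← hy, dotProduct_comm]
  have h2 : x ⬝ᵥ y = x ⬝ᵥ B⁻¹ *ᵥ x := by rw [hy]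
  have := key_ineq hA x y
  have hAB := h y
  nlinarith [this, hAB, h1, h2]

private lemma posdef_smul {m : ℕ} {W : Matrix (Fin m) (Fin m) ℝ} (hW : W.PosDef)
    {c : ℝ} (hc : 0 < c) : (c • W).PosDef := by
  refine Matrix.PosDef.of_dotProduct_mulVec_pos ?_ (fun x hx => ?_)
  · show ((c • W)ᴴ) = c • W
    rw [conjTranspose_smul, hW.isHermitian.eq]
    simp
  · have := hW.dotProduct_mulVec_pos hx
    simp only [smul_mulVec, dotProduct_smul, smul_eq_mul, star_trivial] at *
    exact mul_pos hc this

/-- Loewner bounds for the augmented Schur complement against the scaled mass matrix. -/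
theorem stmt_10 {m : ℕ} (S W : Matrix (Fin m) (Fin m) ℝ)
    (hS : S.PosDef) (hW : W.PosDef)
    (d D : ℝ) (hd : 0 < d) (hdD : d ≤ D)
    (h1 : ∀ x : Fin m → ℝ, d * (x ⬝ᵥ W.mulVec x) ≤ x ⬝ᵥ S.mulVec x)
    (h2 : ∀ x : Fin m → ℝ, x ⬝ᵥ S.mulVec x ≤ D * (x ⬝ᵥ W.mulVec x))
    (γ : ℝ) (hγ : 0 ≤ γ)
    (Sγ Wγ : Matrix (Fin m) (Fin m) ℝ)
    (hSγ : Sγ = (S⁻¹ + γ • W⁻¹)⁻¹) (hWγ : Wγ = ((1 + γ) • W⁻¹)⁻¹) :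
    (∀ x : Fin m → ℝ,
      ((1 + γ) * d / (1 + γ * d)) * (x ⬝ᵥ Wγ.mulVec x) ≤ x ⬝ᵥ Sγ.mulVec x) ∧
    (∀ x : Fin m → ℝ,
      x ⬝ᵥ Sγ.mulVec x ≤ ((1 + γ) * D / (1 + γ * D)) * (x ⬝ᵥ Wγ.mulVec x)) := by
  have hD : 0 < D := hd.trans_le hdD
  have hWdet : IsUnit W.det := hW.det_pos.ne'.isUnit
  have hWinv : W⁻¹.PosDef := hW.inv
  -- inverse of a positive scalar multiple
  have smul_inv_eq : ∀ c : ℝ, 0 < c → (c • W)⁻¹ = c⁻¹ • W⁻¹ := by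
    intro c hc
    letI : Invertible c := invertibleOfNonzero hc.ne'
    rw [Matrix.inv_smul (A := W) c hWdet, invOf_eq_inv]
  have smul_inv_eq' : ∀ c : ℝ, 0 < c → (c • W⁻¹)⁻¹ = c⁻¹ • W := by
    intro c hc
    letI : Invertible c := invertibleOfNonzero hc.ne'
    rw [Matrix.inv_smul (A := W⁻¹) c hWinv.det_pos.ne'.isUnit, invOf_eq_inv,
      Matrix.nonsing_inv_nonsing_inv W hWdet]
  -- quadratic form bounds on S⁻¹
  have hSinv_ub : ∀ x : Fin m → ℝ, x ⬝ᵥ S⁻¹ *ᵥ x ≤ d⁻¹ * (x ⬝ᵥ W⁻¹ *ᵥ x) := by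
    intro x
    have h := myInvLe (posdef_smul hW hd) hS
      (fun x => by simpa [smul_mulVec, dotProduct_smul] using h1 x) x
    rwa [smul_inv_eq d hd, smul_mulVec, dotProduct_smul, smul_eq_mul] at h
  have hSinv_lb : ∀ x : Fin m → ℝ, D⁻¹ * (x ⬝ᵥ W⁻¹ *ᵥ x) ≤ x ⬝ᵥ S⁻¹ *ᵥ x := by
    intro x
    have h := myInvLe hS (posdef_smul hW hD)
      (fun x => by simpa [smul_mulVec, dotProduct_smul] using h2 x) x
    rwa [smul_inv_eq D hD, smul_mulVec, dotProduct_smul, smul_eq_mul] at h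
  -- the middle matrix
  set A : Matrix (Fin m) (Fin m) ℝ := S⁻¹ + γ • W⁻¹ with hA
  have hγW : (γ • W⁻¹).PosSemidef := by
    refine Matrix.PosSemidef.of_dotProduct_mulVec_nonneg ?_ (fun x => ?_)
    · show ((γ • W⁻¹)ᴴ) = γ • W⁻¹
      rw [conjTranspose_smul, hWinv.isHermitian.eq]; simp
    · have := hWinv.posSemidef.dotProduct_mulVec_nonneg x
      simp only [smul_mulVec, dotProduct_smul, smul_eq_mul, star_trivial] at *
      exact mul_nonneg hγ this
  have hApos : A.PosDef := hS.inv.add_posSemidef hγW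
  have hAquad : ∀ x : Fin m → ℝ,
      x ⬝ᵥ A *ᵥ x = x ⬝ᵥ S⁻¹ *ᵥ x + γ * (x ⬝ᵥ W⁻¹ *ᵥ x) := by
    intro x
    simp [hA, Matrix.add_mulVec, dotProduct_add, smul_mulVec, dotProduct_smul]
  have hc1 : (0:ℝ) < D⁻¹ + γ := by positivity
  have hc2 : (0:ℝ) < d⁻¹ + γ := by positivity
  have hW1 : ((D⁻¹ + γ) • W⁻¹).PosDef := posdef_smul hWinv hc1
  have hW2 : ((d⁻¹ + γ) • W⁻¹).PosDef := posdef_smul hWinv hc2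
  -- invert the bounds once more
  have hub : ∀ x : Fin m → ℝ, x ⬝ᵥ A⁻¹ *ᵥ x ≤ (D⁻¹ + γ)⁻¹ * (x ⬝ᵥ W *ᵥ x) := by
    intro x
    have h := myInvLe hW1 hApos (fun x => by
      rw [hAquad x, smul_mulVec, dotProduct_smul, smul_eq_mul, add_mul]
      exact add_le_add (hSinv_lb x) le_rfl) x
    rwa [smul_inv_eq' _ hc1, smul_mulVec, dotProduct_smul, smul_eq_mul] at h
  have hlb : ∀ x : Fin m → ℝ, (d⁻¹ + γ)⁻¹ * (x ⬝ᵥ W *ᵥ x) ≤ x ⬝ᵥ A⁻¹ *ᵥ x := by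
    intro x
    have h := myInvLe hApos hW2 (fun x => by
      rw [hAquad x, smul_mulVec, dotProduct_smul, smul_eq_mul, add_mul]
      exact add_le_add (hSinv_ub x) le_rfl) x
    rwa [smul_inv_eq' _ hc2, smul_mulVec, dotProduct_smul, smul_eq_mul] at h
  have hWγquad : ∀ x : Fin m → ℝ,
      x ⬝ᵥ Wγ *ᵥ x = (1 + γ)⁻¹ * (x ⬝ᵥ W *ᵥ x) := by
    intro x
    rw [hWγ, smul_inv_eq' _ (by positivity), smul_mulVec, dotProduct_smul, smul_eq_mul]
  have h1γd : (0:ℝ) < 1 + γ * d := by positivity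
  have h1γD : (0:ℝ) < 1 + γ * D := by positivity
  have h1γ : (0:ℝ) < 1 + γ := by positivity
  constructor
  · intro x
    have := hlb x
    rw [hSγ]
    rw [hWγquad x]
    have hconst : ((1 + γ) * d / (1 + γ * d)) * ((1 + γ)⁻¹ * (x ⬝ᵥ W *ᵥ x))
        = (d⁻¹ + γ)⁻¹ * (x ⬝ᵥ W *ᵥ x) := by
      field_simp
    rw [hconst]
    exact this
  · intro x
    have := hub x
    rw [hSγ]
    rw [hWγquad x]
    have hconst : ((1 + γ) * D / (1 + γ * D)) * ((1 + γ)⁻¹ * (x ⬝ᵥ W *ᵥ x))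
        = (D⁻¹ + γ)⁻¹ * (x ⬝ᵥ W *ᵥ x) := by
      field_simp
    rw [hconst]
    exact this
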